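/- Let X and Y be disjoint finite sets of nonnegative even integers with |X| > 2 and |Y| > 2 such that every x ∈ X is adjacent in 𝒢_∞ to every y ∈ Y (i.e., a complete bipartite graph K_{|X|,|Y|} sits inside 𝒢_∞). Then either X ⊆ 6ℕ₀ and Y ∩ 6ℕ₀ = ∅, or Y ⊆ 6ℕ₀ and X ∩ 6ℕ₀ = ∅, where 6ℕ₀ denotes the set of nonnegative multiples of 6. -/

import Mathlib

/-- Adjacency in the infinite Goldbach graph `𝒢_∞` on the nonnegative even integers:
distinct `u, v` are adjacent iff both `(u+v)/2` and `|u-v|/2` are odd primes. -/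
def adjInf (u v : ℕ) : Prop :=
  u ≠ v ∧ ((u + v) / 2).Prime ∧ Odd ((u + v) / 2) ∧
    ((max u v - min u v) / 2).Prime ∧ Odd ((max u v - min u v) / 2)

/-- If `x, y` are even multiples of 3 that are adjacent, then `{x,y} = {0,6}`. -/
lemma lemA (x y : ℕ) (hx : 2 ∣ x) (hy : 2 ∣ y) (h : adjInf x y)
    (h3x : 3 ∣ x) (h3y : 3 ∣ y) : (x = 0 ∧ y = 6) ∨ (x = 6 ∧ y = 0) := by
  obtain ⟨hne, hp, -, hq, -⟩ := h
  have h3p : 3 ∣ (x + y) / 2 := by omega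
  have hp3 : (x + y) / 2 = 3 :=
    ((hp.eq_one_or_self_of_dvd 3 h3p).resolve_left (by norm_num)).symm
  rcases le_total x y with h' | h' <;>
    rw [show max x y - min x y = (max x y - min x y) from rfl] at hq
  · rw [max_eq_right h', min_eq_left h'] at hq
    have h3q : 3 ∣ (y - x) / 2 := by omega
    have hq3 : (y - x) / 2 = 3 :=
      ((hq.eq_one_or_self_of_dvd 3 h3q).resolve_left (by norm_num)).symm
    omega
  · rw [max_eq_left h', min_eq_right h'] at hq
    have h3q : 3 ∣ (x - y) / 2 := by omega
    have hq3 : (x - y) / 2 = 3 :=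
      ((hq.eq_one_or_self_of_dvd 3 h3q).resolve_left (by norm_num)).symm
    omega

/-- If `x, y` are even non-multiples of 3 that are adjacent, then
`x + y = 6` or they differ by 6. -/
lemma lemB (x y : ℕ) (hx : 2 ∣ x) (hy : 2 ∣ y) (h : adjInf x y)
    (h3x : ¬ 3 ∣ x) (h3y : ¬ 3 ∣ y) : x + y = 6 ∨ y = x + 6 ∨ x = y + 6 := by
  obtain ⟨hne, hp, -, hq, -⟩ := h
  rcases le_total x y with h' | h'
  · rw [max_eq_right h', min_eq_left h'] at hq
    have hx' : x % 3 = 1 ∨ x % 3 = 2 := by omega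
    have hy' : y % 3 = 1 ∨ y % 3 = 2 := by omega
    have key : 3 ∣ (x + y) / 2 ∨ 3 ∣ (y - x) / 2 := by
      rcases hx' with h1 | h1 <;> rcases hy' with h2 | h2
      · right; omega
      · left; omega
      · left; omega
      · right; omega
    rcases key with k | k
    · have hp3 : (x + y) / 2 = 3 :=
        ((hp.eq_one_or_self_of_dvd 3 k).resolve_left (by norm_num)).symm
      omega
    · have hq3 : (y - x) / 2 = 3 :=
        ((hq.eq_one_or_self_of_dvd 3 k).resolve_left (by norm_num)).symm
      omega
  · rw [max_eq_left h', min_eq_right h'] at hq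
    have hx' : x % 3 = 1 ∨ x % 3 = 2 := by omega
    have hy' : y % 3 = 1 ∨ y % 3 = 2 := by omega
    have key : 3 ∣ (x + y) / 2 ∨ 3 ∣ (x - y) / 2 := by
      rcases hx' with h1 | h1 <;> rcases hy' with h2 | h2
      · right; omega
      · left; omega
      · left; omega
      · right; omega
    rcases key with k | k
    · have hp3 : (x + y) / 2 = 3 :=
        ((hp.eq_one_or_self_of_dvd 3 k).resolve_left (by norm_num)).symm
      omega
    · have hq3 : (x - y) / 2 = 3 :=
        ((hq.eq_one_or_self_of_dvd 3 k).resolve_left (by norm_num)).symm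
      omega

/-- If `X, Y` are disjoint finite sets of nonnegative even integers with
`|X| > 2` and `|Y| > 2` such that every `x ∈ X` is adjacent in `𝒢_∞` to every `y ∈ Y`,
then either `X ⊆ 6ℕ₀` and `Y ∩ 6ℕ₀ = ∅`, or `Y ⊆ 6ℕ₀` and `X ∩ 6ℕ₀ = ∅`. -/
theorem stmt_17 (X Y : Finset ℕ) (hdisj : Disjoint X Y)
    (hX : ∀ x ∈ X, Even x) (hY : ∀ y ∈ Y, Even y)
    (hXc : 2 < X.card) (hYc : 2 < Y.card)
    (hadj : ∀ x ∈ X, ∀ y ∈ Y, adjInf x y) :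
    ((∀ x ∈ X, 6 ∣ x) ∧ (∀ y ∈ Y, ¬ 6 ∣ y)) ∨
    ((∀ y ∈ Y, 6 ∣ y) ∧ (∀ x ∈ X, ¬ 6 ∣ x)) := by
  have hX2 : ∀ x ∈ X, 2 ∣ x := fun x hx => (hX x hx).two_dvd
  have hY2 : ∀ y ∈ Y, 2 ∣ y := fun y hy => (hY y hy).two_dvd
  -- two multiples of 3 on one side kill any multiple of 3 on the other side
  have hα : ∀ y ∈ Y, 3 ∣ y → ∀ x₁ ∈ X, 3 ∣ x₁ → ∀ x₂ ∈ X, 3 ∣ x₂ → x₁ ≠ x₂ → False := by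
    intro y hy h3y x₁ h1 d1 x₂ h2 d2 hne
    have a1 := lemA x₁ y (hX2 x₁ h1) (hY2 y hy) (hadj x₁ h1 y hy) d1 h3y
    have a2 := lemA x₂ y (hX2 x₂ h2) (hY2 y hy) (hadj x₂ h2 y hy) d2 h3y
    omega
  have hβ : ∀ x ∈ X, 3 ∣ x → ∀ y₁ ∈ Y, 3 ∣ y₁ → ∀ y₂ ∈ Y, 3 ∣ y₂ → y₁ ≠ y₂ → False := by
    intro x hx h3x y₁ h1 d1 y₂ h2 d2 hne
    have a1 := lemA x y₁ (hX2 x hx) (hY2 y₁ h1) (hadj x hx y₁ h1) h3x d1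
    have a2 := lemA x y₂ (hX2 x hx) (hY2 y₂ h2) (hadj x hx y₂ h2) h3x d2
    omega
  have hkey : (∀ x ∈ X, 3 ∣ x) ∨ (∀ y ∈ Y, 3 ∣ y) := by
    by_contra hcon
    push_neg at hcon
    obtain ⟨⟨x₁, hx₁X, hx₁3⟩, ⟨y₁, hy₁Y, hy₁3⟩⟩ := hcon
    -- the non-multiples of 3 in Y form a set of size ≤ 2
    have hYsub : Y.filter (fun y => ¬ 3 ∣ y) ⊆
        {x₁ + 6, if 6 ≤ x₁ then x₁ - 6 else 6 - x₁} := by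
      intro y hy
      rw [Finset.mem_filter] at hy
      obtain ⟨hyY, hy3⟩ := hy
      have := lemB x₁ y (hX2 x₁ hx₁X) (hY2 y hyY) (hadj x₁ hx₁X y hyY) hx₁3 hy3
      have hx2 := hX2 x₁ hx₁X
      simp only [Finset.mem_insert, Finset.mem_singleton]
      split_ifs with h6 <;> omega
    have hXsub : X.filter (fun x => ¬ 3 ∣ x) ⊆
        {y₁ + 6, if 6 ≤ y₁ then y₁ - 6 else 6 - y₁} := by
      intro x hx
      rw [Finset.mem_filter] at hx
      obtain ⟨hxX, hx3⟩ := hx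
      have := lemB x y₁ (hX2 x hxX) (hY2 y₁ hy₁Y) (hadj x hxX y₁ hy₁Y) hx3 hy₁3
      have hy2 := hY2 y₁ hy₁Y
      simp only [Finset.mem_insert, Finset.mem_singleton]
      split_ifs with h6 <;> omega
    have hY1c : (Y.filter (fun y => ¬ 3 ∣ y)).card ≤ 2 :=
      (Finset.card_le_card hYsub).trans ((Finset.card_insert_le _ _).trans (by simp))
    have hX1c : (X.filter (fun x => ¬ 3 ∣ x)).card ≤ 2 :=
      (Finset.card_le_card hXsub).trans ((Finset.card_insert_le _ _).trans (by simp))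
    have hYsplit := Finset.card_filter_add_card_filter_not
      (s := Y) (p := fun y => 3 ∣ y)
    have hXsplit := Finset.card_filter_add_card_filter_not
      (s := X) (p := fun x => 3 ∣ x)
    -- so each side has at least one multiple of 3
    have hY0 : (Y.filter (fun y => 3 ∣ y)).Nonempty := by
      rw [← Finset.card_pos]; omega
    have hX0 : (X.filter (fun x => 3 ∣ x)).Nonempty := by
      rw [← Finset.card_pos]; omega
    obtain ⟨y₀, hy₀⟩ := hY0
    obtain ⟨x₀, hx₀⟩ := hX0
    rw [Finset.mem_filter] at hy₀ hx₀
    -- each side has exactly one multiple of 3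
    have hX0c : (X.filter (fun x => 3 ∣ x)).card ≤ 1 := by
      by_contra hc
      obtain ⟨a, ha, b, hb, hab⟩ := Finset.one_lt_card.mp
        (show 1 < (X.filter (fun x => 3 ∣ x)).card by omega)
      rw [Finset.mem_filter] at ha hb
      exact hα y₀ hy₀.1 hy₀.2 a ha.1 ha.2 b hb.1 hb.2 hab
    have hY0c : (Y.filter (fun y => 3 ∣ y)).card ≤ 1 := by
      by_contra hc
      obtain ⟨a, ha, b, hb, hab⟩ := Finset.one_lt_card.mp
        (show 1 < (Y.filter (fun y => 3 ∣ y)).card by omega)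
      rw [Finset.mem_filter] at ha hb
      exact hβ x₀ hx₀.1 hx₀.2 a ha.1 ha.2 b hb.1 hb.2 hab
    -- hence exactly two non-multiples of 3 on each side
    have hX1 : (X.filter (fun x => ¬ 3 ∣ x)).card = 2 := by omega
    have hY1 : (Y.filter (fun y => ¬ 3 ∣ y)).card = 2 := by omega
    obtain ⟨a, b, hab, hXab⟩ := Finset.card_eq_two.mp hX1
    obtain ⟨c, d, hcd, hYcd⟩ := Finset.card_eq_two.mp hY1
    have haX : a ∈ X ∧ ¬ 3 ∣ a := Finset.mem_filter.mp (show a ∈ X.filter (fun x => ¬ 3 ∣ x) by rw [hXab]; simp)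
    have hbX : b ∈ X ∧ ¬ 3 ∣ b := Finset.mem_filter.mp (show b ∈ X.filter (fun x => ¬ 3 ∣ x) by rw [hXab]; simp)
    have hcY : c ∈ Y ∧ ¬ 3 ∣ c := Finset.mem_filter.mp (show c ∈ Y.filter (fun y => ¬ 3 ∣ y) by rw [hYcd]; simp)
    have hdY : d ∈ Y ∧ ¬ 3 ∣ d := Finset.mem_filter.mp (show d ∈ Y.filter (fun y => ¬ 3 ∣ y) by rw [hYcd]; simp)
    have p1 := lemB a c (hX2 a haX.1) (hY2 c hcY.1) (hadj a haX.1 c hcY.1) haX.2 hcY.2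
    have p2 := lemB a d (hX2 a haX.1) (hY2 d hdY.1) (hadj a haX.1 d hdY.1) haX.2 hdY.2
    have p3 := lemB b c (hX2 b hbX.1) (hY2 c hcY.1) (hadj b hbX.1 c hcY.1) hbX.2 hcY.2
    have p4 := lemB b d (hX2 b hbX.1) (hY2 d hdY.1) (hadj b hbX.1 d hdY.1) hbX.2 hdY.2
    have h2a := hX2 a haX.1
    have h2b := hX2 b hbX.1
    have h2c := hY2 c hcY.1
    have h2d := hY2 d hdY.1
    have h3a := haX.2
    have h3b := hbX.2
    have h3c := hcY.2
    have h3d := hdY.2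
    omega
  rcases hkey with hk | hk
  · left
    constructor
    · intro x hx
      have := hk x hx
      have := hX2 x hx
      omega
    · intro y hy h6y
      obtain ⟨a, ha, b, hb, hab⟩ := Finset.one_lt_card.mp (show 1 < X.card by omega)
      exact hα y hy (by omega) a ha (hk a ha) b hb (hk b hb) hab
  · right
    constructor
    · intro y hy
      have := hk y hy
      have := hY2 y hy
      omega
    · intro x hx h6x
      obtain ⟨a, ha, b, hb, hab⟩ := Finset.one_lt_card.mp (show 1 < Y.card by omega)
      exact hβ x hx (by omega) a ha (hk a ha) b hb (hk b hb) hab
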